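/- Let a, λ > 0, let w : [0, ∞) → ℝ be continuous, and suppose v : [0, τ) → (0, ∞) is differentiable and satisfies v'(t) ≤ -a v(t) - λ e^{w(t)} v(t)^{-2} with v(0) = B₀ > 0. If B(t) = e^{-a t}(B₀³ - 3λ ∫₀ᵗ e^{3 a s + w(s)} ds)^{1/3} is the solution of the corresponding Bernoulli equation with the same initial datum, then v(t) ≤ B(t) for all t in the common interval of existence. -/

import Mathlib

open intervalIntegral Real

/-- comparison principle: a positive differentiable `v` with
`v' ≤ -a v - λ e^{w t} v⁻²`, `v 0 = B₀`, stays below the Bernoulli solution `B`. -/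
theorem bernoulli_comparison (a lam B₀ τ : ℝ) (ha : 0 < a) (hlam : 0 < lam)
    (hB₀ : 0 < B₀) (w : ℝ → ℝ) (hw : Continuous w)
    (v v' : ℝ → ℝ)
    (hv_pos : ∀ t ∈ Set.Ico (0:ℝ) τ, 0 < v t)
    (hv_deriv : ∀ t ∈ Set.Ico (0:ℝ) τ, HasDerivAt v (v' t) t)
    (hv_ineq : ∀ t ∈ Set.Ico (0:ℝ) τ,
      v' t ≤ -a * v t - lam * Real.exp (w t) * (v t) ^ (-2 : ℤ))
    (hv0 : v 0 = B₀)
    (B : ℝ → ℝ)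
    (hB : ∀ t, B t = Real.exp (-a * t) *
      (B₀ ^ 3 - 3 * lam * ∫ s in (0:ℝ)..t, Real.exp (3 * a * s + w s)) ^ ((1:ℝ)/3)) :
    ∀ t ∈ Set.Ico (0:ℝ) τ,
      0 < B₀ ^ 3 - 3 * lam * ∫ s in (0:ℝ)..t, Real.exp (3 * a * s + w s) →
      v t ≤ B t := by
  intro t ht hC
  obtain ⟨ht0, htτ⟩ := ht
  set f : ℝ → ℝ := fun s => Real.exp (3 * a * s + w s) with hf_def
  have hf_cont : Continuous f := by continuity
  set F : ℝ → ℝ := fun u => ∫ s in (0:ℝ)..u, f s with hF_def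
  have hF_deriv : ∀ s : ℝ, HasDerivAt F (f s) s := by
    intro s
    exact intervalIntegral.integral_hasDerivAt_right
      (hf_cont.intervalIntegrable 0 s)
      (hf_cont.aestronglyMeasurable.stronglyMeasurableAtFilter)
      hf_cont.continuousAt
  set φ : ℝ → ℝ := fun s => Real.exp (3 * a * s) * v s ^ 3 + 3 * lam * F s with hφ_def
  -- derivative of φ on Ico 0 τ
  have hφ_deriv : ∀ s ∈ Set.Ico (0:ℝ) τ, HasDerivAt φ
      (3 * a * Real.exp (3 * a * s) * v s ^ 3
        + Real.exp (3 * a * s) * (3 * v s ^ 2 * v' s) + 3 * lam * f s) s := by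
    intro s hs
    have h1 : HasDerivAt (fun u : ℝ => Real.exp (3 * a * u)) (3 * a * Real.exp (3 * a * s)) s := by
      have := ((hasDerivAt_id s).const_mul (3 * a)).exp
      simpa [mul_comm] using this
    have h2 : HasDerivAt (fun u => v u ^ 3) ((3:ℕ) * v s ^ 2 * v' s) s := by
      simpa using (hv_deriv s hs).fun_pow 3
    have h3 := (h1.fun_mul h2).fun_add ((hF_deriv s).const_mul (3 * lam))
    exact h3.congr_deriv (by push_cast; ring)
  have hφ_nonpos : ∀ s ∈ Set.Ico (0:ℝ) τ,
      3 * a * Real.exp (3 * a * s) * v s ^ 3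
        + Real.exp (3 * a * s) * (3 * v s ^ 2 * v' s) + 3 * lam * f s ≤ 0 := by
    intro s hs
    have hvpos := hv_pos s hs
    have hineq := hv_ineq s hs
    have hz : (v s) ^ (-2 : ℤ) = (v s ^ 2)⁻¹ := by
      rw [zpow_neg, zpow_two, sq]
    have key : 3 * v s ^ 2 * v' s ≤ -3 * a * v s ^ 3 - 3 * lam * Real.exp (w s) := by
      have h3v : (0:ℝ) < 3 * v s ^ 2 := by positivity
      have := mul_le_mul_of_nonneg_left hineq h3v.le
      calc 3 * v s ^ 2 * v' s
          ≤ 3 * v s ^ 2 * (-a * v s - lam * Real.exp (w s) * (v s) ^ (-2 : ℤ)) := this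
        _ = -3 * a * v s ^ 3 - 3 * lam * Real.exp (w s) * (v s ^ 2 * (v s ^ 2)⁻¹) := by
            rw [hz]; ring
        _ = -3 * a * v s ^ 3 - 3 * lam * Real.exp (w s) := by
            rw [mul_inv_cancel₀ (by positivity)]; ring
    have hexp : (0:ℝ) < Real.exp (3 * a * s) := Real.exp_pos _
    have := mul_le_mul_of_nonneg_left key hexp.le
    have hfs : f s = Real.exp (3 * a * s) * Real.exp (w s) := by
      rw [hf_def]; simp [Real.exp_add]
    nlinarith [this, Real.exp_pos (w s)]
  -- φ is antitone on [0, t]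
  have hsub : Set.Icc (0:ℝ) t ⊆ Set.Ico (0:ℝ) τ := fun s hs =>
    ⟨hs.1, lt_of_le_of_lt hs.2 htτ⟩
  have hanti : AntitoneOn φ (Set.Icc 0 t) := by
    apply antitoneOn_of_deriv_nonpos (convex_Icc 0 t)
    · intro s hs
      exact ((hφ_deriv s (hsub hs)).continuousAt).continuousWithinAt
    · intro s hs
      rw [interior_Icc] at hs
      exact ((hφ_deriv s (hsub ⟨hs.1.le, hs.2.le⟩)).differentiableAt).differentiableWithinAt
    · intro s hs
      rw [interior_Icc] at hs
      have hmem := hsub ⟨hs.1.le, hs.2.le⟩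
      rw [(hφ_deriv s hmem).deriv]
      exact hφ_nonpos s hmem
  have hφt : φ t ≤ φ 0 :=
    hanti (Set.left_mem_Icc.2 ht0) (Set.right_mem_Icc.2 ht0) ht0
  have hφ0 : φ 0 = B₀ ^ 3 := by
    simp [hφ_def, hF_def, hv0, intervalIntegral.integral_same]
  have hmain : Real.exp (3 * a * t) * v t ^ 3 ≤ B₀ ^ 3 - 3 * lam * F t := by
    have : Real.exp (3 * a * t) * v t ^ 3 + 3 * lam * F t ≤ B₀ ^ 3 := by
      rw [← hφ0]; exact hφt
    linarith
  -- conclude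
  have hCpos : (0:ℝ) < B₀ ^ 3 - 3 * lam * F t := hC
  have hvt : 0 < v t := hv_pos t ⟨ht0, htτ⟩
  have hBcube : B t ^ 3 = Real.exp (-(3 * a * t)) * (B₀ ^ 3 - 3 * lam * F t) := by
    have h13 : ((B₀ ^ 3 - 3 * lam * F t) ^ ((1:ℝ)/3)) ^ (3:ℕ)
        = B₀ ^ 3 - 3 * lam * F t := by
      rw [← Real.rpow_natCast _ 3, ← Real.rpow_mul hCpos.le]
      norm_num
    have hexp3 : Real.exp (-a * t) ^ (3:ℕ) = Real.exp (-(3 * a * t)) := by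
      rw [← Real.exp_nat_mul]; ring_nf
    rw [hB t, mul_pow, h13, hexp3]
  have hv3 : v t ^ 3 ≤ B t ^ 3 := by
    rw [hBcube]
    have hexp : (0:ℝ) < Real.exp (3 * a * t) := Real.exp_pos _
    rw [Real.exp_neg]
    have := mul_le_mul_of_nonneg_left hmain (le_of_lt (inv_pos.2 hexp))
    calc v t ^ 3 = (Real.exp (3 * a * t))⁻¹ * (Real.exp (3 * a * t) * v t ^ 3) := by
          field_simp
      _ ≤ (Real.exp (3 * a * t))⁻¹ * (B₀ ^ 3 - 3 * lam * F t) := this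
  have hBpos : 0 < B t := by
    rw [hB t]
    positivity
  exact le_of_pow_le_pow_left₀ (by norm_num) hBpos.le hv3
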